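/- Let k > 0 and U = {(x,y) ∈ ℝ² : x² < k}. The smooth functions h₁ = −√(k − x²)·cos y, h₂ = √(k − x²)·sin y, h₃ = x satisfy, with respect to the canonical Poisson bracket {f,g} = ∂f/∂x ∂g/∂y − ∂f/∂y ∂g/∂x, the so(3) relations {h₁,h₂} = h₃, {h₂,h₃} = h₁, {h₃,h₁} = h₂, and moreover h₁² + h₂² + h₃² = k identically on U. -/

import Mathlib

/-- Canonical Poisson bracket on the plane:
`{f,g} = ∂f/∂x ∂g/∂y − ∂f/∂y ∂g/∂x`. -/
noncomputable def pb (f g : ℝ × ℝ → ℝ) (p : ℝ × ℝ) : ℝ :=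
  fderiv ℝ f p (1, 0) * fderiv ℝ g p (0, 1) - fderiv ℝ f p (0, 1) * fderiv ℝ g p (1, 0)

/-- On `{x² < k}` the functions
`h₁ = −√(k−x²)·cos y`, `h₂ = √(k−x²)·sin y`, `h₃ = x` satisfy the so(3) relations
`{h₁,h₂} = h₃`, `{h₂,h₃} = h₁`, `{h₃,h₁} = h₂`, and `h₁² + h₂² + h₃² = k`. -/
theorem so3_leaf_realization (k : ℝ) (hk : 0 < k) :
    ∀ p : ℝ × ℝ, p.1 ^ 2 < k →
      pb (fun q => -(Real.sqrt (k - q.1 ^ 2) * Real.cos q.2))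
          (fun q => Real.sqrt (k - q.1 ^ 2) * Real.sin q.2) p = p.1 ∧
      pb (fun q => Real.sqrt (k - q.1 ^ 2) * Real.sin q.2) (fun q => q.1) p
        = -(Real.sqrt (k - p.1 ^ 2) * Real.cos p.2) ∧
      pb (fun q => q.1) (fun q => -(Real.sqrt (k - q.1 ^ 2) * Real.cos q.2)) p
        = Real.sqrt (k - p.1 ^ 2) * Real.sin p.2 ∧
      (-(Real.sqrt (k - p.1 ^ 2) * Real.cos p.2)) ^ 2
        + (Real.sqrt (k - p.1 ^ 2) * Real.sin p.2) ^ 2 + p.1 ^ 2 = k := by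
  intro p hp
  obtain ⟨x, y⟩ := p
  simp only at hp ⊢
  have hpos : 0 < k - x ^ 2 := by linarith
  set s := Real.sqrt (k - x ^ 2) with hs
  have hs0 : s ≠ 0 := ne_of_gt (Real.sqrt_pos.mpr hpos)
  have hs2 : s ^ 2 = k - x ^ 2 := Real.sq_sqrt hpos.le
  -- derivative of inner function k - x²
  have hinner : HasFDerivAt (fun q : ℝ × ℝ => k - q.1 ^ 2)
      ((-(2 * x ^ 1)) • (ContinuousLinearMap.fst ℝ ℝ ℝ)) (x, y) :=
    ((hasDerivAt_pow 2 x).const_sub k).comp_hasFDerivAt (f := Prod.fst) (x, y) hasFDerivAt_fst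
  -- derivative of s(q) = √(k - q.1²)
  have hsq : HasFDerivAt (fun q : ℝ × ℝ => Real.sqrt (k - q.1 ^ 2))
      ((1 / (2 * s)) • ((-(2 * x ^ 1)) • (ContinuousLinearMap.fst ℝ ℝ ℝ))) (x, y) :=
    (Real.hasDerivAt_sqrt (ne_of_gt hpos)).comp_hasFDerivAt (x, y) hinner
  have hcos : HasFDerivAt (fun q : ℝ × ℝ => Real.cos q.2)
      ((-Real.sin y) • (ContinuousLinearMap.snd ℝ ℝ ℝ)) (x, y) :=
    (Real.hasDerivAt_cos y).comp_hasFDerivAt (f := Prod.snd) (x, y) hasFDerivAt_snd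
  have hsin : HasFDerivAt (fun q : ℝ × ℝ => Real.sin q.2)
      ((Real.cos y) • (ContinuousLinearMap.snd ℝ ℝ ℝ)) (x, y) :=
    (Real.hasDerivAt_sin y).comp_hasFDerivAt (f := Prod.snd) (x, y) hasFDerivAt_snd
  have hf1 := ((hsq.fun_mul hcos).fun_neg).fderiv
  have hf2 := (hsq.fun_mul hsin).fderiv
  have hf3 : fderiv ℝ (fun q : ℝ × ℝ => q.1) (x, y) = ContinuousLinearMap.fst ℝ ℝ ℝ :=
    hasFDerivAt_fst.fderiv
  have pyth : Real.cos y ^ 2 + Real.sin y ^ 2 = 1 := by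
    rw [add_comm]; exact Real.sin_sq_add_cos_sq y
  -- directional derivative values
  have v1x : fderiv ℝ (fun q : ℝ × ℝ => -(Real.sqrt (k - q.1 ^ 2) * Real.cos q.2)) (x, y) (1, 0)
      = x / s * Real.cos y := by
    rw [hf1]; simp; field_simp
  have v1y : fderiv ℝ (fun q : ℝ × ℝ => -(Real.sqrt (k - q.1 ^ 2) * Real.cos q.2)) (x, y) (0, 1)
      = s * Real.sin y := by
    rw [hf1]; simp; exact Or.inl hs.symm
  have v2x : fderiv ℝ (fun q : ℝ × ℝ => Real.sqrt (k - q.1 ^ 2) * Real.sin q.2) (x, y) (1, 0)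
      = -(x / s) * Real.sin y := by
    rw [hf2]; simp; field_simp
  have v2y : fderiv ℝ (fun q : ℝ × ℝ => Real.sqrt (k - q.1 ^ 2) * Real.sin q.2) (x, y) (0, 1)
      = s * Real.cos y := by
    rw [hf2]; simp; exact Or.inl hs.symm
  have v3x : fderiv ℝ (fun q : ℝ × ℝ => q.1) (x, y) ((1 : ℝ), (0 : ℝ)) = 1 := by
    rw [hf3]; simp
  have v3y : fderiv ℝ (fun q : ℝ × ℝ => q.1) (x, y) ((0 : ℝ), (1 : ℝ)) = 0 := by
    rw [hf3]; simp
  refine ⟨?_, ?_, ?_, ?_⟩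
  · rw [pb, v1x, v1y, v2x, v2y]
    field_simp
    linear_combination x * pyth
  · rw [pb, v2x, v2y, v3x, v3y]
    ring
  · rw [pb, v1x, v1y, v3x, v3y]
    ring
  · linear_combination s ^ 2 * pyth + hs2
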